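/- Let M ∈ ℝ₊^{k×m}, q* ∈ ℝ^k with positive entries, r* a probability vector on [k], and P ∈ ℝ^{m×(m−1)} a matrix whose columns are an orthonormal basis of {v ∈ ℝ^m : 𝟙^T v = 0}. Suppose M^T (r*/q*) = 𝟙. Define H = P^T M^T diag(r*_j/(q*_j)^2) M P and C = P^T M^T D_q S_r D_q M P, where D_q = diag(1/q*_j) and S_r = diag(r*) − r* (r*)^T. Then C = H. -/

import Mathlib

open Finset Matrix

theorem stmt_15 {k m : ℕ} (M : Matrix (Fin k) (Fin m) ℝ)
    (qstar : Fin k → ℝ) (hq : ∀ j, 0 < qstar j)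
    (rstar : Fin k → ℝ) (hr0 : ∀ j, 0 ≤ rstar j) (hr1 : ∑ j, rstar j = 1)
    (P : Matrix (Fin m) (Fin (m-1)) ℝ)
    (hPP : Pᵀ * P = 1)
    (hP1 : Pᵀ.mulVec (fun _ => (1:ℝ)) = 0)
    (hKKT : Mᵀ.mulVec (fun j => rstar j / qstar j) = fun _ => 1) :
    Pᵀ * Mᵀ * (Matrix.diagonal fun j => 1 / qstar j) *
        (Matrix.diagonal rstar - Matrix.vecMulVec rstar rstar) *
        (Matrix.diagonal fun j => 1 / qstar j) * M * P =
      Pᵀ * Mᵀ * (Matrix.diagonal fun j => rstar j / (qstar j) ^ 2) * M * P := by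
  set u : Fin k → ℝ := fun j => rstar j / qstar j with hu
  have hmid : (Matrix.diagonal fun j => 1 / qstar j) *
      (Matrix.diagonal rstar - Matrix.vecMulVec rstar rstar) *
      (Matrix.diagonal fun j => 1 / qstar j) =
      (Matrix.diagonal fun j => rstar j / (qstar j) ^ 2) - Matrix.vecMulVec u u := by
    rw [Matrix.mul_sub, Matrix.sub_mul]
    congr 1
    · have hfun : (fun j => 1 / qstar j * rstar j * (1 / qstar j)) =
          (fun j => rstar j / (qstar j) ^ 2) := by
        funext j
        have hne := (hq j).ne'
        rw [sq]
        field_simp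
      rw [Matrix.diagonal_mul_diagonal, Matrix.diagonal_mul_diagonal, hfun]
    · ext i j
      simp only [Matrix.mul_diagonal, Matrix.diagonal_mul, Matrix.vecMulVec_apply, hu]
      field_simp
  have hmid' : ∀ (X : Matrix (Fin k) (Fin (m-1)) ℝ),
      (Matrix.diagonal fun j => 1 / qstar j) *
        ((Matrix.diagonal rstar - Matrix.vecMulVec rstar rstar) *
          ((Matrix.diagonal fun j => 1 / qstar j) * X)) =
      ((Matrix.diagonal fun j => rstar j / (qstar j) ^ 2) - Matrix.vecMulVec u u) * X := by
    intro X
    rw [← Matrix.mul_assoc, ← Matrix.mul_assoc, hmid]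
  have hc : Pᵀ * Mᵀ * Matrix.replicateCol Unit u = 0 := by
    rw [Matrix.mul_assoc, ← Matrix.replicateCol_mulVec, hKKT, ← Matrix.replicateCol_mulVec, hP1]
    ext i j
    simp [Matrix.replicateCol]
  have hzero : Pᵀ * (Mᵀ * (Matrix.vecMulVec u u * (M * P))) = 0 := by
    rw [Matrix.vecMulVec_eq Unit]
    simp only [← Matrix.mul_assoc]
    rw [hc]
    simp
  simp only [Matrix.mul_assoc]
  rw [hmid' (M * P), Matrix.sub_mul, Matrix.mul_sub, Matrix.mul_sub, hzero, sub_zero]
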